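/- Let Γ be a finite simplicial graph, and suppose each vertex group G_i is countably infinite. Then the kernel K_Γ of the canonical map G_Γ → ∏ G_i is isomorphic to the commutator subgroup [A_Γ, A_Γ] of the right-angled Artin group A_Γ on Γ. -/

import Mathlib

open Monoid
open scoped commutatorElement

namespace GPaper

variable {ι : Type*}

/-- The relator subgroup of the graph product: normal closure of commutators of
elements of vertex groups at adjacent vertices. -/
def Rels (Γ : SimpleGraph ι) (G : ι → Type*) [∀ i, Group (G i)] : Subgroup (Monoid.CoprodI G) :=
  Subgroup.normalClosure
    { x | ∃ (i j : ι) (g : G i) (h : G j), Γ.Adj i j ∧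
          x = ⁅Monoid.CoprodI.of g, Monoid.CoprodI.of h⁆ }

instance (Γ : SimpleGraph ι) (G : ι → Type*) [∀ i, Group (G i)] : (Rels Γ G).Normal :=
  Subgroup.normalClosure_normal

/-- The graph product of the groups `G i` over the simplicial graph `Γ`. -/
abbrev GP (Γ : SimpleGraph ι) (G : ι → Type*) [∀ i, Group (G i)] :=
  Monoid.CoprodI G ⧸ Rels Γ G

/-- The canonical inclusion of a vertex group into the graph product. -/
def of (Γ : SimpleGraph ι) (G : ι → Type*) [∀ i, Group (G i)] (i : ι) : G i →* GP Γ G :=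
  (QuotientGroup.mk' (Rels Γ G)).comp Monoid.CoprodI.of

/-- The canonical homomorphism from the graph product to the direct product. -/
def proj [DecidableEq ι] (Γ : SimpleGraph ι) (G : ι → Type*) [∀ i, Group (G i)] :
    GP Γ G →* (∀ i, G i) :=
  QuotientGroup.lift (Rels Γ G) (Monoid.CoprodI.lift (fun i => MonoidHom.mulSingle G i)) (by
    intro x hx
    refine Subgroup.normalClosure_le_normal ?_ hx
    rintro y ⟨i, j, g, h, hadj, rfl⟩
    have hij : i ≠ j := hadj.ne
    simp only [SetLike.mem_coe, MonoidHom.mem_ker, map_commutatorElement,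
      Monoid.CoprodI.lift_of]
    rw [commutatorElement_eq_one_iff_commute]
    exact Pi.mulSingle_commute hij g h)

/-- The canonical epimorphism `G_Γ → G_Γ'` when `Γ'` is obtained from `Γ` by adding edges. -/
def mapGraph (Γ Γ' : SimpleGraph ι) (hΓ : Γ ≤ Γ') (G : ι → Type*) [∀ i, Group (G i)] :
    GP Γ G →* GP Γ' G :=
  QuotientGroup.lift (Rels Γ G) (QuotientGroup.mk' (Rels Γ' G)) (by
    intro x hx
    rw [QuotientGroup.ker_mk']
    refine Subgroup.normalClosure_le_normal ?_ hx
    rintro y ⟨i, j, g, h, hadj, rfl⟩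
    exact Subgroup.subset_normalClosure ⟨i, j, g, h, hΓ hadj, rfl⟩)

/-- The element of the graph product represented by a word (list of syllables). -/
def wordProd (Γ : SimpleGraph ι) (G : ι → Type*) [∀ i, Group (G i)]
    (w : List (Σ i, G i)) : GP Γ G :=
  (w.map fun s => of Γ G s.1 s.2).prod

/-- The image of a word in the direct product of the vertex groups. -/
def piProd [DecidableEq ι] (G : ι → Type*) [∀ i, Group (G i)]
    (w : List (Σ i, G i)) : ∀ i, G i :=
  (w.map fun s => Pi.mulSingle s.1 s.2).prod

/-- The ordered product of those syllables of a word that belong to `G i`. -/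
def sylProd [DecidableEq ι] (G : ι → Type*) [∀ i, Group (G i)]
    (w : List (Σ i, G i)) (i : ι) : G i :=
  (w.filterMap fun s => if h : s.1 = i then some (cast (congrArg G h) s.2) else none).prod

/-- The normal (syllable) length of an element of a graph product:
the minimal number of syllables in a word representing it. -/
noncomputable def nl (Γ : SimpleGraph ι) (G : ι → Type*) [∀ i, Group (G i)]
    (g : GP Γ G) : ℕ :=
  sInf { n | ∃ w : List (Σ i, G i), wordProd Γ G w = g ∧ w.length = n }

section Phi

open scoped Classical

variable [DecidableEq ι] {G G' : ι → Type*} [∀ i, Group (G i)] [∀ i, Group (G' i)]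

/-- One step of the recursive construction of `Φ`: the new syllable
`f(π(w))⁻¹ · f(π(w)s)` (dropped if trivial), where `g = π(w)`. -/
noncomputable def phiStep (f : ∀ i, G i → G' i) (g : ∀ i, G i) (s : Σ i, G i) : List (Σ i, G' i) :=
  if (f s.1 (g s.1))⁻¹ * f s.1 (g s.1 * s.2) = 1 then []
  else [⟨s.1, (f s.1 (g s.1))⁻¹ * f s.1 (g s.1 * s.2)⟩]

/-- Auxiliary recursion: process the word left to right, carrying the
image `g` of the prefix in the direct product. -/
noncomputable def phiAux (f : ∀ i, G i → G' i) : (∀ i, G i) → List (Σ i, G i) → List (Σ i, G' i)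
  | _, [] => []
  | g, s :: w => phiStep f g s ++ phiAux f (g * Pi.mulSingle s.1 s.2) w

/-- The word map `Φ : S* → S'*` induced by the set maps `f i : G i → G' i`. -/
noncomputable def phiWord (f : ∀ i, G i → G' i) (w : List (Σ i, G i)) : List (Σ i, G' i) :=
  phiAux f 1 w

end Phi


section AuxProof

open Monoid

variable {Γ : SimpleGraph ι} {G : ι → Type*} [∀ i, Group (G i)]

theorem of_apply (i : ι) (g : G i) :
    of Γ G i g = QuotientGroup.mk' (Rels Γ G) (CoprodI.of g) := rfl

theorem of_commute' {i j : ι} (h : Γ.Adj i j) (a : G i) (b : G j) :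
    Commute (of Γ G i a) (of Γ G j b) := by
  rw [← commutatorElement_eq_one_iff_commute, of_apply, of_apply,
    ← map_commutatorElement]
  rw [QuotientGroup.mk'_apply, QuotientGroup.eq_one_iff]
  exact Subgroup.subset_normalClosure ⟨i, j, a, b, h, rfl⟩

theorem wordProd_nil : wordProd Γ G [] = 1 := rfl

theorem wordProd_cons (s : Σ i, G i) (w : List (Σ i, G i)) :
    wordProd Γ G (s :: w) = of Γ G s.1 s.2 * wordProd Γ G w := by
  simp [wordProd]

theorem wordProd_append (u v : List (Σ i, G i)) :
    wordProd Γ G (u ++ v) = wordProd Γ G u * wordProd Γ G v := by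
  simp [wordProd]

theorem wordProd_singleton (s : Σ i, G i) :
    wordProd Γ G [s] = of Γ G s.1 s.2 := by
  simp [wordProd]

theorem exists_word (x : GP Γ G) : ∃ w, wordProd Γ G w = x := by
  induction x using QuotientGroup.induction_on with
  | H y =>
    induction y using CoprodI.induction_on with
    | one => exact ⟨[], rfl⟩
    | of i g => exact ⟨[⟨i, g⟩], by simp [wordProd_singleton, of_apply]⟩
    | mul x y hx hy =>
      obtain ⟨wx, hwx⟩ := hx
      obtain ⟨wy, hwy⟩ := hy
      exact ⟨wx ++ wy, by rw [wordProd_append, hwx, hwy]; rfl⟩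

/-- Elementary moves on words over the vertex groups. -/
inductive GPMove (Γ : SimpleGraph ι) (G : ι → Type*) [∀ i, Group (G i)] :
    List (Σ i, G i) → List (Σ i, G i) → Prop
  | delete (u v : List (Σ i, G i)) (i : ι) :
      GPMove Γ G (u ++ ⟨i, 1⟩ :: v) (u ++ v)
  | merge (u v : List (Σ i, G i)) (i : ι) (a b : G i) :
      GPMove Γ G (u ++ ⟨i, a⟩ :: ⟨i, b⟩ :: v) (u ++ ⟨i, a * b⟩ :: v)
  | swap (u v : List (Σ i, G i)) (i j : ι) (a : G i) (b : G j) (h : Γ.Adj i j) :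
      GPMove Γ G (u ++ ⟨i, a⟩ :: ⟨j, b⟩ :: v) (u ++ ⟨j, b⟩ :: ⟨i, a⟩ :: v)

theorem GPMove.append_left {w w' : List (Σ i, G i)} (h : GPMove Γ G w w')
    (a : List (Σ i, G i)) : GPMove Γ G (a ++ w) (a ++ w') := by
  cases h with
  | delete u v i =>
    rw [← List.append_assoc, ← List.append_assoc]
    exact GPMove.delete (a ++ u) v i
  | merge u v i x y =>
    rw [← List.append_assoc, ← List.append_assoc]
    exact GPMove.merge (a ++ u) v i x y
  | swap u v i j x y hadj =>
    rw [← List.append_assoc, ← List.append_assoc]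
    exact GPMove.swap (a ++ u) v i j x y hadj

theorem GPMove.append_right {w w' : List (Σ i, G i)} (h : GPMove Γ G w w')
    (a : List (Σ i, G i)) : GPMove Γ G (w ++ a) (w' ++ a) := by
  cases h with
  | delete u v i =>
    rw [List.append_assoc, List.append_assoc, List.cons_append]
    exact GPMove.delete u (v ++ a) i
  | merge u v i x y =>
    rw [List.append_assoc, List.append_assoc, List.cons_append, List.cons_append]
    exact GPMove.merge u (v ++ a) i x y
  | swap u v i j x y hadj =>
    rw [List.append_assoc, List.append_assoc, List.cons_append, List.cons_append]
    exact GPMove.swap u (v ++ a) i j x y hadj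

/-- Formal inverse of a word. -/
def invw (w : List (Σ i, G i)) : List (Σ i, G i) :=
  (w.map fun s => ⟨s.1, s.2⁻¹⟩).reverse

theorem invw_nil : invw ([] : List (Σ i, G i)) = [] := rfl

theorem invw_cons (s : Σ i, G i) (w : List (Σ i, G i)) :
    invw (s :: w) = invw w ++ [⟨s.1, s.2⁻¹⟩] := by
  simp [invw]

theorem invw_append (u v : List (Σ i, G i)) :
    invw (u ++ v) = invw v ++ invw u := by
  simp [invw]

theorem GPMove.inv {w w' : List (Σ i, G i)} (h : GPMove Γ G w w') :
    GPMove Γ G (invw w) (invw w') := by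
  cases h with
  | delete u v i =>
    have h1 : invw (u ++ ⟨i, (1 : G i)⟩ :: v) = invw v ++ ⟨i, 1⟩ :: invw u := by
      rw [show (⟨i, (1 : G i)⟩ : Σ i, G i) :: v = [⟨i, 1⟩] ++ v from rfl, invw_append,
        invw_append]
      simp [invw]
    rw [h1, invw_append]
    exact GPMove.delete (invw v) (invw u) i
  | merge u v i a b =>
    have h1 : invw (u ++ ⟨i, a⟩ :: ⟨i, b⟩ :: v)
        = invw v ++ ⟨i, b⁻¹⟩ :: ⟨i, a⁻¹⟩ :: invw u := by
      rw [show (⟨i, a⟩ : Σ i, G i) :: ⟨i, b⟩ :: v = [⟨i, a⟩, ⟨i, b⟩] ++ v from rfl,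
        invw_append, invw_append]
      simp [invw]
    have h2 : invw (u ++ ⟨i, a * b⟩ :: v) = invw v ++ ⟨i, b⁻¹ * a⁻¹⟩ :: invw u := by
      rw [show (⟨i, a * b⟩ : Σ i, G i) :: v = [⟨i, a * b⟩] ++ v from rfl, invw_append,
        invw_append]
      simp [invw, mul_inv_rev]
    rw [h1, h2]
    exact GPMove.merge (invw v) (invw u) i b⁻¹ a⁻¹
  | swap u v i j a b hadj =>
    have h1 : invw (u ++ ⟨i, a⟩ :: ⟨j, b⟩ :: v)
        = invw v ++ ⟨j, b⁻¹⟩ :: ⟨i, a⁻¹⟩ :: invw u := by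
      rw [show (⟨i, a⟩ : Σ i, G i) :: ⟨j, b⟩ :: v = [⟨i, a⟩, ⟨j, b⟩] ++ v from rfl,
        invw_append, invw_append]
      simp [invw]
    have h2 : invw (u ++ ⟨j, b⟩ :: ⟨i, a⟩ :: v)
        = invw v ++ ⟨i, a⁻¹⟩ :: ⟨j, b⁻¹⟩ :: invw u := by
      rw [show (⟨j, b⟩ : Σ i, G i) :: ⟨i, a⟩ :: v = [⟨j, b⟩, ⟨i, a⟩] ++ v from rfl,
        invw_append, invw_append]
      simp [invw]
    rw [h1, h2]
    exact GPMove.swap (invw v) (invw u) j i b⁻¹ a⁻¹ hadj.symm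

/-- The quotient of the set of words by the equivalence generated by elementary moves. -/
def WQ (Γ : SimpleGraph ι) (G : ι → Type*) [∀ i, Group (G i)] : Type _ :=
  Quot (GPMove Γ G)

namespace WQ

def mk (w : List (Σ i, G i)) : WQ Γ G := Quot.mk _ w

instance : One (WQ Γ G) := ⟨mk []⟩

instance : Mul (WQ Γ G) :=
  ⟨fun x y =>
    Quot.lift
      (fun a => Quot.lift (fun b => mk (a ++ b))
        (fun _ _ h => Quot.sound (h.append_left a)) y)
      (fun _ _ h => by
        induction y using Quot.ind with | _ b =>
        exact Quot.sound (h.append_right b)) x⟩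

instance : Inv (WQ Γ G) :=
  ⟨Quot.lift (fun w => mk (invw w)) (fun _ _ h => Quot.sound h.inv)⟩

theorem mk_mul (u v : List (Σ i, G i)) : (mk u : WQ Γ G) * mk v = mk (u ++ v) := rfl

theorem one_def : (1 : WQ Γ G) = mk [] := rfl

theorem mk_inv (w : List (Σ i, G i)) : (mk w : WQ Γ G)⁻¹ = mk (invw w) := rfl

theorem inv_cancel (w : List (Σ i, G i)) :
    Relation.EqvGen (GPMove Γ G) (invw w ++ w) [] := by
  induction w with
  | nil => exact Relation.EqvGen.refl []
  | cons s t ih =>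
    obtain ⟨i, a⟩ := s
    have h1 : invw (⟨i, a⟩ :: t) ++ ⟨i, a⟩ :: t
        = invw t ++ ⟨i, a⁻¹⟩ :: ⟨i, a⟩ :: t := by
      rw [invw_cons, List.append_assoc]; rfl
    refine Relation.EqvGen.trans _ (invw t ++ ⟨i, a⁻¹ * a⟩ :: t) _
      (h1 ▸ Relation.EqvGen.rel _ _ (GPMove.merge (invw t) t i a⁻¹ a)) ?_
    rw [inv_mul_cancel]
    exact Relation.EqvGen.trans _ (invw t ++ t) _
      (Relation.EqvGen.rel _ _ (GPMove.delete (invw t) t i)) ih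

instance : Group (WQ Γ G) where
  mul_assoc a b c := by
    induction a using Quot.ind with | _ a =>
    induction b using Quot.ind with | _ b =>
    induction c using Quot.ind with | _ c =>
    exact congrArg mk (List.append_assoc a b c)
  one_mul a := by
    induction a using Quot.ind with | _ a => rfl
  mul_one a := by
    induction a using Quot.ind with | _ a =>
    exact congrArg mk (List.append_nil a)
  inv_mul_cancel a := by
    induction a using Quot.ind with | _ a =>
    show (mk a)⁻¹ * mk a = mk []
    rw [mk_inv, mk_mul]
    exact Quot.eq.mpr (inv_cancel (Γ := Γ) a)

/-- The inclusion of a vertex group into `WQ`. -/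
def ofW (Γ : SimpleGraph ι) (G : ι → Type*) [∀ i, Group (G i)] (i : ι) :
    G i →* WQ Γ G where
  toFun g := mk [⟨i, g⟩]
  map_one' := Quot.sound (GPMove.delete [] [] i)
  map_mul' a b := (Quot.sound (GPMove.merge [] [] i a b)).symm

end WQ

/-- The canonical map `GP Γ G →* WQ Γ G`. -/
def psiW (Γ : SimpleGraph ι) (G : ι → Type*) [∀ i, Group (G i)] :
    GP Γ G →* WQ Γ G :=
  QuotientGroup.lift (Rels Γ G) (CoprodI.lift (WQ.ofW Γ G)) (by
    intro x hx
    refine Subgroup.normalClosure_le_normal ?_ hx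
    rintro y ⟨i, j, g, h, hadj, rfl⟩
    simp only [SetLike.mem_coe, MonoidHom.mem_ker, map_commutatorElement,
      CoprodI.lift_of]
    rw [commutatorElement_eq_one_iff_commute]
    show WQ.mk [⟨i, g⟩] * WQ.mk [⟨j, h⟩] = WQ.mk [⟨j, h⟩] * WQ.mk [⟨i, g⟩]
    rw [WQ.mk_mul, WQ.mk_mul]
    exact Quot.sound (GPMove.swap [] [] i j g h hadj))

theorem psiW_of (i : ι) (g : G i) : psiW Γ G (of Γ G i g) = WQ.mk [⟨i, g⟩] := by
  rw [of_apply, QuotientGroup.mk'_apply]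
  show QuotientGroup.lift _ _ _ (QuotientGroup.mk _) = _
  rw [QuotientGroup.lift_mk', CoprodI.lift_of]
  rfl

theorem psiW_wordProd (w : List (Σ i, G i)) :
    psiW Γ G (wordProd Γ G w) = WQ.mk w := by
  induction w with
  | nil => exact map_one _
  | cons s t ih =>
    rw [wordProd_cons, map_mul, psiW_of, ih, WQ.mk_mul]
    rfl

theorem eqvGen_of_wordProd_eq {w w' : List (Σ i, G i)}
    (h : wordProd Γ G w = wordProd Γ G w') :
    Relation.EqvGen (GPMove Γ G) w w' := by
  rw [← Quot.eq]
  show WQ.mk w = WQ.mk w'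
  rw [← psiW_wordProd, ← psiW_wordProd, h]

end AuxProof

section PhiProof

open scoped Classical

variable [DecidableEq ι] {Γ : SimpleGraph ι} {G G' : ι → Type*}
  [∀ i, Group (G i)] [∀ i, Group (G' i)]

theorem piProd_nil : piProd G ([] : List (Σ i, G i)) = 1 := rfl

theorem piProd_cons (s : Σ i, G i) (w : List (Σ i, G i)) :
    piProd G (s :: w) = Pi.mulSingle s.1 s.2 * piProd G w := by
  simp [piProd]

theorem piProd_append (u v : List (Σ i, G i)) :
    piProd G (u ++ v) = piProd G u * piProd G v := by
  simp [piProd]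

theorem piProd_singleton (s : Σ i, G i) :
    piProd G [s] = Pi.mulSingle s.1 s.2 := by
  simp [piProd]

theorem proj_of (i : ι) (g : G i) :
    proj Γ G (of Γ G i g) = Pi.mulSingle i g := by
  rw [of_apply, QuotientGroup.mk'_apply]
  show QuotientGroup.lift _ _ _ (QuotientGroup.mk _) = _
  rw [QuotientGroup.lift_mk', CoprodI.lift_of]
  rfl

theorem proj_wordProd (w : List (Σ i, G i)) :
    proj Γ G (wordProd Γ G w) = piProd G w := by
  induction w with
  | nil => exact map_one _
  | cons s t ih => rw [wordProd_cons, map_mul, proj_of, ih, piProd_cons]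

variable (f : ∀ i, G i → G' i)

theorem phiAux_nil (g : ∀ i, G i) : phiAux f g [] = [] := rfl

theorem phiAux_cons (g : ∀ i, G i) (s : Σ i, G i) (w : List (Σ i, G i)) :
    phiAux f g (s :: w) = phiStep f g s ++ phiAux f (g * Pi.mulSingle s.1 s.2) w := rfl

theorem phiAux_append (g : ∀ i, G i) (u v : List (Σ i, G i)) :
    phiAux f g (u ++ v) = phiAux f g u ++ phiAux f (g * piProd G u) v := by
  induction u generalizing g with
  | nil => rw [phiAux_nil, piProd_nil, mul_one, List.nil_append, List.nil_append]
  | cons s t ih =>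
    rw [List.cons_append, phiAux_cons, phiAux_cons, ih, piProd_cons, List.append_assoc,
      mul_assoc]

theorem phiAux_singleton (g : ∀ i, G i) (s : Σ i, G i) :
    phiAux f g [s] = phiStep f g s := by
  rw [phiAux_cons, phiAux_nil, List.append_nil]

theorem wordProd_phiStep (g : ∀ i, G i) (s : Σ i, G i) :
    wordProd Γ G' (phiStep f g s)
      = of Γ G' s.1 ((f s.1 (g s.1))⁻¹ * f s.1 (g s.1 * s.2)) := by
  rw [phiStep]
  split_ifs with h
  · rw [h, map_one, wordProd_nil]
  · rw [wordProd_singleton]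

theorem piProd_phiStep (g : ∀ i, G i) (s : Σ i, G i) :
    piProd G' (phiStep f g s)
      = Pi.mulSingle s.1 ((f s.1 (g s.1))⁻¹ * f s.1 (g s.1 * s.2)) := by
  rw [phiStep]
  split_ifs with h
  · rw [h, Pi.mulSingle_one, piProd_nil]
  · rw [piProd_singleton]

theorem piProd_phiAux (g : ∀ i, G i) (w : List (Σ i, G i)) (i : ι) :
    piProd G' (phiAux f g w) i = (f i (g i))⁻¹ * f i (g i * piProd G w i) := by
  induction w generalizing g with
  | nil => simp [phiAux_nil, piProd_nil]
  | cons s t ih =>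
    obtain ⟨j, a⟩ := s
    by_cases h : j = i
    · subst h
      simp only [phiAux_cons, piProd_append, Pi.mul_apply, piProd_phiStep, piProd_cons,
        ih, Pi.mulSingle_eq_same]
      rw [mul_assoc, mul_inv_cancel_left, mul_assoc]
    · simp only [phiAux_cons, piProd_append, Pi.mul_apply, piProd_phiStep, piProd_cons,
        ih, Pi.mulSingle_eq_of_ne' h, mul_one, one_mul]

theorem wordProd_phiAux_move {w w' : List (Σ i, G i)} (h : GPMove Γ G w w')
    (g : ∀ i, G i) :
    wordProd Γ G' (phiAux f g w) = wordProd Γ G' (phiAux f g w') := by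
  cases h with
  | delete u v i =>
    simp only [show (⟨i, (1 : G i)⟩ : Σ i, G i) :: v = [⟨i, 1⟩] ++ v from rfl,
      phiAux_append, phiAux_singleton, wordProd_append, wordProd_phiStep,
      piProd_singleton, Pi.mulSingle_one, mul_one, Pi.mul_apply, Pi.mulSingle_eq_same,
      inv_mul_cancel, map_one, one_mul]
  | merge u v i a b =>
    simp only [show (⟨i, a⟩ : Σ i, G i) :: ⟨i, b⟩ :: v = [⟨i, a⟩] ++ ([⟨i, b⟩] ++ v) from rfl,
      show (⟨i, a * b⟩ : Σ i, G i) :: v = [⟨i, a * b⟩] ++ v from rfl,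
      phiAux_append, phiAux_singleton, wordProd_append, wordProd_phiStep,
      piProd_singleton, Pi.mul_apply, Pi.mulSingle_eq_same]
    rw [show g * piProd G u * Pi.mulSingle i a * Pi.mulSingle i b
        = g * piProd G u * Pi.mulSingle i (a * b) from by rw [mul_assoc, ← Pi.mulSingle_mul],
      ← mul_assoc ((of Γ G' i) _), ← map_mul,
      mul_assoc ((f i (g i * piProd G u i))⁻¹), mul_inv_cancel_left,
      mul_assoc (g i * piProd G u i) a b]
  | swap u v i j a b hadj =>
    have hne : i ≠ j := hadj.ne
    simp only [show (⟨i, a⟩ : Σ i, G i) :: ⟨j, b⟩ :: v = [⟨i, a⟩] ++ ([⟨j, b⟩] ++ v) from rfl,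
      show (⟨j, b⟩ : Σ i, G i) :: ⟨i, a⟩ :: v = [⟨j, b⟩] ++ ([⟨i, a⟩] ++ v) from rfl,
      phiAux_append, phiAux_singleton, wordProd_append, wordProd_phiStep,
      piProd_singleton, Pi.mul_apply, Pi.mulSingle_eq_same,
      Pi.mulSingle_eq_of_ne' hne, Pi.mulSingle_eq_of_ne hne, mul_one]
    rw [show g * piProd G u * Pi.mulSingle i a * Pi.mulSingle j b
        = g * piProd G u * Pi.mulSingle j b * Pi.mulSingle i a from by
          rw [mul_assoc, (Pi.mulSingle_commute hne a b).eq, ← mul_assoc],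
      ← mul_assoc ((of Γ G' i) _), (of_commute' hadj _ _).eq, mul_assoc]

theorem wordProd_phiAux_eqv {w w' : List (Σ i, G i)}
    (h : Relation.EqvGen (GPMove Γ G) w w') (g : ∀ i, G i) :
    wordProd Γ G' (phiAux f g w) = wordProd Γ G' (phiAux f g w') := by
  induction h with
  | rel x y hxy => exact wordProd_phiAux_move f hxy g
  | refl x => rfl
  | symm x y _ ih => exact ih.symm
  | trans x y z _ _ ih1 ih2 => exact ih1.trans ih2

theorem wordProd_phiAux_comp (f' : ∀ i, G' i → G i)
    (hf : ∀ i x, f' i (f i x) = x) (g : ∀ i, G i) (w : List (Σ i, G i)) :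
    wordProd Γ G (phiAux f' (fun i => f i (g i)) (phiAux f g w)) = wordProd Γ G w := by
  induction w generalizing g with
  | nil => rfl
  | cons s t ih =>
    obtain ⟨i, a⟩ := s
    rw [phiAux_cons, phiAux_append, wordProd_append]
    have hcarry : ((fun i => f i (g i)) * piProd G' (phiStep f g ⟨i, a⟩))
        = fun i' => f i' ((g * Pi.mulSingle i a) i') := by
      funext k
      rw [Pi.mul_apply, piProd_phiStep]
      by_cases hk : i = k
      · subst hk
        rw [Pi.mulSingle_eq_same, Pi.mul_apply, Pi.mulSingle_eq_same,
          mul_inv_cancel_left]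
      · rw [Pi.mulSingle_eq_of_ne' hk, Pi.mul_apply, Pi.mulSingle_eq_of_ne' hk,
          mul_one, mul_one]
    have hhead : wordProd Γ G (phiAux f' (fun i => f i (g i)) (phiStep f g ⟨i, a⟩))
        = of Γ G i a := by
      rw [phiStep]
      split_ifs with hv
      · have ha : a = 1 := by
          have h1 : f i (g i) = f i (g i * a) := inv_mul_eq_one.mp hv
          have h2 : g i = g i * a := by
            have := congrArg (f' i) h1
            rwa [hf, hf] at this
          exact (left_eq_mul.mp h2)
        rw [ha, map_one]; rfl
      · rw [phiAux_singleton, wordProd_phiStep]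
        congr 1
        show (f' i (f i (g i)))⁻¹ * f' i (f i (g i) * ((f i (g i))⁻¹ * f i (g i * a))) = a
        rw [mul_inv_cancel_left, hf, hf, inv_mul_cancel_left]
    rw [hhead, hcarry, ih, wordProd_cons]

end PhiProof

section PsiProof

open scoped Classical

variable [DecidableEq ι] {Γ : SimpleGraph ι} {G G' : ι → Type*}
  [∀ i, Group (G i)] [∀ i, Group (G' i)]

/-- The map `GP Γ G → GP Γ G'` induced by set maps `f i : G i → G' i`. -/
noncomputable def Psi (f : ∀ i, G i → G' i) (x : GP Γ G) : GP Γ G' :=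
  wordProd Γ G' (phiWord f (Classical.choose (exists_word x)))

theorem Psi_eq (f : ∀ i, G i → G' i) {w : List (Σ i, G i)} {x : GP Γ G}
    (h : wordProd Γ G w = x) :
    Psi f x = wordProd Γ G' (phiWord f w) := by
  have h2 := Classical.choose_spec (exists_word x)
  exact wordProd_phiAux_eqv f (eqvGen_of_wordProd_eq (h2.trans h.symm)) 1

theorem Psi_mem (f : ∀ i, G i → G' i) {x : GP Γ G} (hx : x ∈ (proj Γ G).ker) :
    Psi f x ∈ (proj Γ G').ker := by
  obtain ⟨w, hw⟩ := exists_word x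
  have hpw : piProd G w = 1 := by
    rw [← proj_wordProd, hw]; exact hx
  rw [MonoidHom.mem_ker, Psi_eq f hw, proj_wordProd]
  funext i
  rw [phiWord, piProd_phiAux, hpw, Pi.one_apply, Pi.one_apply, mul_one, inv_mul_cancel]

theorem Psi_mul (f : ∀ i, G i → G' i) {x y : GP Γ G} (hx : x ∈ (proj Γ G).ker) :
    Psi f (x * y) = Psi f x * Psi f y := by
  obtain ⟨wx, hwx⟩ := exists_word x
  obtain ⟨wy, hwy⟩ := exists_word y
  have hpx : piProd G wx = 1 := by
    rw [← proj_wordProd, hwx]; exact hx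
  have h : wordProd Γ G (wx ++ wy) = x * y := by rw [wordProd_append, hwx, hwy]
  rw [Psi_eq f h, Psi_eq f hwx, Psi_eq f hwy, phiWord, phiAux_append, hpx, mul_one,
    wordProd_append]
  rfl

theorem Psi_comp (f : ∀ i, G i → G' i) (f' : ∀ i, G' i → G i)
    (hf : ∀ i x, f' i (f i x) = x) (hf1 : ∀ i, f i 1 = 1) (x : GP Γ G) :
    Psi f' (Psi f x) = x := by
  obtain ⟨w, hw⟩ := exists_word x
  rw [Psi_eq f hw]
  rw [Psi_eq f' (rfl : wordProd Γ G' (phiWord f w) = wordProd Γ G' (phiWord f w))]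
  rw [← hw]
  have h1 : (1 : ∀ i, G' i) = fun i => f i ((1 : ∀ i, G i) i) := by
    funext i; simp [hf1 i]
  rw [phiWord, phiWord, h1]
  exact wordProd_phiAux_comp f f' hf 1 w

end PsiProof

section KerComm

variable [DecidableEq ι] [Fintype ι] {Γ : SimpleGraph ι}

theorem ker_proj_eq_commutator (Γ : SimpleGraph ι) (Z : ι → Type*) [∀ i, CommGroup (Z i)] :
    (proj Γ (fun i => Z i)).ker = commutator (GP Γ (fun i => Z i)) := by
  set G := fun i => Z i
  let h : (∀ i, G i) →* Abelianization (GP Γ G) :=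
    { toFun := fun g => ∏ i, Abelianization.of (of Γ G i (g i))
      map_one' := by simp
      map_mul' := by
        intro a b
        rw [← Finset.prod_mul_distrib]
        refine Finset.prod_congr rfl fun i _ => ?_
        rw [Pi.mul_apply, map_mul, map_mul] }
  have key : h.comp (proj Γ G) = Abelianization.of := by
    apply QuotientGroup.monoidHom_ext
    apply CoprodI.ext_hom
    intro i
    ext g
    show h (proj Γ G (of Γ G i g)) = Abelianization.of (of Γ G i g)
    rw [proj_of]
    show (∏ j, Abelianization.of (of Γ G j (Pi.mulSingle i g j))) = _
    rw [Finset.prod_eq_single i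
      (fun j _ hj => by rw [Pi.mulSingle_eq_of_ne' hj.symm, map_one, map_one])
      (fun hi => absurd (Finset.mem_univ i) hi)]
    rw [Pi.mulSingle_eq_same]
  ext x
  constructor
  · intro hx
    have h1 : Abelianization.of x = 1 := by
      rw [← key]
      show h (proj Γ G x) = 1
      rw [MonoidHom.mem_ker.mp hx, map_one]
    exact (QuotientGroup.eq_one_iff x).mp h1
  · intro hx
    exact Abelianization.commutator_subset_ker (proj Γ G) hx

end KerComm

/-- If each vertex group is countably infinite, the kernel `K_Γ` is
isomorphic to the commutator subgroup of the right-angled Artin group on `Γ`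
(the graph product with every vertex group `ℤ`). -/
theorem stmt10 {ι : Type*} [DecidableEq ι] [Fintype ι] (Γ : SimpleGraph ι)
    (G : ι → Type*) [∀ i, Group (G i)] [∀ i, Countable (G i)] [∀ i, Infinite (G i)] :
    Nonempty ((proj Γ G).ker ≃* commutator (GP Γ (fun _ : ι => Multiplicative ℤ))) := by
  classical
  have he : ∀ i, ∃ e : G i ≃ Multiplicative ℤ, e 1 = 1 := by
    intro i
    obtain ⟨d⟩ := nonempty_denumerable (G i)
    let e₁ : G i ≃ ℤ := (Denumerable.eqv (G i)).trans (Denumerable.eqv ℤ).symm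
    refine ⟨(e₁.trans (Equiv.subRight (e₁ 1))).trans Multiplicative.ofAdd, ?_⟩
    simp [Equiv.subRight]
  choose e he1 using he
  let f : ∀ i, G i → Multiplicative ℤ := fun i => e i
  let f' : ∀ i, Multiplicative ℤ → G i := fun i => (e i).symm
  have hf : ∀ i x, f' i (f i x) = x := fun i x => (e i).symm_apply_apply x
  have hf2 : ∀ i x, f i (f' i x) = x := fun i x => (e i).apply_symm_apply x
  have hf1 : ∀ i, f i 1 = 1 := he1
  have hf'1 : ∀ i, f' i (1 : Multiplicative ℤ) = 1 := fun i => by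
    show (e i).symm 1 = 1
    rw [← he1 i, (e i).symm_apply_apply]
  have E1 : (proj Γ G).ker ≃* (proj Γ (fun _ : ι => Multiplicative ℤ)).ker :=
    { toFun := fun k => ⟨Psi f k.1, Psi_mem f k.2⟩
      invFun := fun k => ⟨Psi f' k.1, Psi_mem f' k.2⟩
      left_inv := fun k => Subtype.ext (Psi_comp f f' hf hf1 k.1)
      right_inv := fun k => Subtype.ext (Psi_comp f' f hf2 hf'1 k.1)
      map_mul' := fun a b => Subtype.ext (Psi_mul f a.2) }
  exact ⟨E1.trans (MulEquiv.subgroupCongr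
    (ker_proj_eq_commutator Γ (fun _ : ι => Multiplicative ℤ)))⟩

end GPaper
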